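/- Let K(t; x, y) = (4πt)^{-n/2} exp(−|x−y|²/(4t)). For every m ≥ 0 and p > 0 there is a constant c_{m,p}, independent of x ∈ ℝⁿ and t > 0, such that ∫₀^t ∫_{ℝⁿ} K(t−s; 0, y) |y|^m K(ps; y, x) dy ds ≤ c_{m,p} t^{1+m/2} K((1+p)t; 0, x). -/

import Mathlib

open Real MeasureTheory

/-- The Euclidean heat kernel on `ℝⁿ`. -/
noncomputable def heatK (n : ℕ) (t : ℝ) (x y : EuclideanSpace ℝ (Fin n)) : ℝ :=
  (4 * π * t) ^ (-(n : ℝ) / 2) * Real.exp (-‖x - y‖ ^ 2 / (4 * t))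

lemma gauss_integrable (n : ℕ) {β : ℝ} (hβ : 0 < β) :
    Integrable (fun y : EuclideanSpace ℝ (Fin n) ↦ Real.exp (-β * ‖y‖ ^ 2)) := by
  have h := (GaussianFourier.integrable_cexp_neg_mul_sq_norm_add (b := (β:ℂ))
    (by simpa using hβ) 0 (0 : EuclideanSpace ℝ (Fin n))).norm
  refine h.congr ?_
  filter_upwards with y
  simp [Complex.norm_exp]
  left; norm_cast

lemma rpow_aux {A B C P : ℝ} (hA : 0 < A) (hB : 0 < B) (hC : 0 < C)
    (h : P * C = A * B) (r : ℝ) : A ^ (-r) * B ^ (-r) * P ^ r = C ^ (-r) := by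
  have hP : P = A * B / C := by field_simp at h ⊢; linarith
  subst hP
  rw [Real.div_rpow (by positivity) hC.le, Real.mul_rpow hA.le hB.le,
    Real.rpow_neg hA.le, Real.rpow_neg hB.le, Real.rpow_neg hC.le]
  have h1 : A ^ r ≠ 0 := (Real.rpow_pos_of_pos hA _).ne'
  have h2 : B ^ r ≠ 0 := (Real.rpow_pos_of_pos hB _).ne'
  field_simp

lemma rpow_aux2 {A B Q : ℝ} (hA : 0 < A) (hB : 0 < B) (hQ : 0 < Q)
    (h : Q * A = B) (r : ℝ) : A ^ (-r) = Q ^ r * B ^ (-r) := by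
  have hA' : A = B / Q := by rw [← h]; field_simp
  subst hA'
  rw [Real.div_rpow hB.le hQ.le, Real.rpow_neg hQ.le]
  field_simp

lemma heatK_conv (n : ℕ) {a b : ℝ} (ha : 0 < a) (hb : 0 < b) (x : EuclideanSpace ℝ (Fin n)) :
    Integrable (fun y : EuclideanSpace ℝ (Fin n) ↦ heatK n a 0 y * heatK n b y x) ∧
    ∫ y : EuclideanSpace ℝ (Fin n), heatK n a 0 y * heatK n b y x = heatK n (a + b) 0 x := by
  have hab : 0 < a + b := by linarith
  set β : ℝ := (a + b) / (4 * (a * b)) with hβdef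
  have hβ : 0 < β := by positivity
  set v : EuclideanSpace ℝ (Fin n) := (a / (a + b)) • x with hvdef
  set D : ℝ := (4 * π * a) ^ (-(n : ℝ) / 2) * (4 * π * b) ^ (-(n : ℝ) / 2) *
      Real.exp (-‖x‖ ^ 2 / (4 * (a + b))) with hDdef
  have key : ∀ y : EuclideanSpace ℝ (Fin n),
      heatK n a 0 y * heatK n b y x = D * Real.exp (-β * ‖y - v‖ ^ 2) := by
    intro y
    have h0 : ‖(0 : EuclideanSpace ℝ (Fin n)) - y‖ = ‖y‖ := by rw [zero_sub, norm_neg]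
    have e1 : ‖y - x‖ ^ 2 = ‖y‖ ^ 2 - 2 * (inner ℝ y x : ℝ) + ‖x‖ ^ 2 := norm_sub_sq_real y x
    have e2 : ‖y - v‖ ^ 2
        = ‖y‖ ^ 2 - 2 * ((a / (a + b)) * (inner ℝ y x : ℝ)) + (a / (a + b)) ^ 2 * ‖x‖ ^ 2 := by
      rw [norm_sub_sq_real, real_inner_smul_right, norm_smul, Real.norm_eq_abs,
        abs_of_pos (div_pos ha hab), mul_pow]
    have expeq : Real.exp (-‖y‖ ^ 2 / (4 * a)) * Real.exp (-‖y - x‖ ^ 2 / (4 * b))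
        = Real.exp (-‖x‖ ^ 2 / (4 * (a + b))) * Real.exp (-β * ‖y - v‖ ^ 2) := by
      rw [← Real.exp_add, ← Real.exp_add]
      congr 1
      rw [e1, e2, hβdef]
      field_simp
      ring
    simp only [heatK, hDdef, h0]
    linear_combination ((4 * π * a) ^ (-(n : ℝ) / 2) * (4 * π * b) ^ (-(n : ℝ) / 2)) * expeq
  have hInt : Integrable (fun y : EuclideanSpace ℝ (Fin n) ↦ D * Real.exp (-β * ‖y - v‖ ^ 2)) :=
    ((gauss_integrable n hβ).comp_sub_right v).const_mul D
  constructor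
  · exact hInt.congr (by filter_upwards with y using (key y).symm)
  · have : ∫ y : EuclideanSpace ℝ (Fin n), heatK n a 0 y * heatK n b y x
        = ∫ y : EuclideanSpace ℝ (Fin n), D * Real.exp (-β * ‖y - v‖ ^ 2) := by
      exact integral_congr_ae (by filter_upwards with y using key y)
    rw [this, integral_const_mul,
      integral_sub_right_eq_self (fun y : EuclideanSpace ℝ (Fin n) ↦ Real.exp (-β * ‖y‖ ^ 2)) v,
      GaussianFourier.integral_rexp_neg_mul_sq_norm hβ, finrank_euclideanSpace_fin]
    have hconst : (4 * π * a) ^ (-(n : ℝ) / 2) * (4 * π * b) ^ (-(n : ℝ) / 2) *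
        (π / β) ^ ((n : ℝ) / 2) = (4 * π * (a + b)) ^ (-(n : ℝ) / 2) := by
      have hπ : (0:ℝ) < π := pi_pos
      rw [show (-(n : ℝ) / 2) = -((n : ℝ) / 2) by ring]
      refine rpow_aux (by positivity) (by positivity) (by positivity) ?_ _
      rw [hβdef]
      field_simp
    simp only [heatK, hDdef]
    rw [show (0 : EuclideanSpace ℝ (Fin n)) - x = -x by rw [zero_sub], norm_neg]
    calc (4 * π * a) ^ (-(n : ℝ) / 2) * (4 * π * b) ^ (-(n : ℝ) / 2) *
        Real.exp (-‖x‖ ^ 2 / (4 * (a + b))) * (π / β) ^ ((n : ℝ) / 2)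
        = ((4 * π * a) ^ (-(n : ℝ) / 2) * (4 * π * b) ^ (-(n : ℝ) / 2) *
            (π / β) ^ ((n : ℝ) / 2)) * Real.exp (-‖x‖ ^ 2 / (4 * (a + b))) := by ring
      _ = (4 * π * (a + b)) ^ (-(n : ℝ) / 2) * Real.exp (-‖x‖ ^ 2 / (4 * (a + b))) := by
          rw [hconst]

lemma heatK_nonneg (n : ℕ) {t : ℝ} (ht : 0 ≤ t) (x y : EuclideanSpace ℝ (Fin n)) :
    0 ≤ heatK n t x y :=
  mul_nonneg (Real.rpow_nonneg (by positivity) _) (Real.exp_nonneg _)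

lemma sqrt_pow_eq_rpow {τ : ℝ} (hτ : 0 ≤ τ) (m : ℕ) :
    Real.sqrt τ ^ m = τ ^ ((m : ℝ) / 2) := by
  rw [Real.sqrt_eq_rpow, ← Real.rpow_natCast (τ ^ ((1:ℝ)/2)) m, ← Real.rpow_mul hτ]
  congr 1
  ring

/-- Core scalar absorption bound. -/
lemma core_bound (m : ℕ) {δ τ r : ℝ} (hδ0 : 0 < δ) (hτ : 0 < τ) (hr : 0 ≤ r) :
    r ^ m * Real.exp (-(δ * r ^ 2) / (4 * τ)) ≤
      2 ^ m * (1 + (m.factorial : ℝ) / δ ^ m) * τ ^ ((m : ℝ) / 2) := by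
  set A := Real.sqrt τ with hAdef
  have hA : 0 < A := Real.sqrt_pos.mpr hτ
  have hA2 : A ^ 2 = τ := Real.sq_sqrt hτ.le
  have hAm : A ^ m = τ ^ ((m : ℝ) / 2) := sqrt_pow_eq_rpow hτ.le m
  have hQ : (0:ℝ) ≤ (m.factorial : ℝ) / δ ^ m := by positivity
  rw [← hAm]
  rcases le_or_gt r (2 * A) with hcase | hcase
  · have h1 : r ^ m ≤ (2 * A) ^ m := pow_le_pow_left₀ hr hcase m
    have h2 : Real.exp (-(δ * r ^ 2) / (4 * τ)) ≤ 1 := by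
      rw [Real.exp_le_one_iff]
      have : 0 ≤ δ * r ^ 2 := by positivity
      have : 0 < 4 * τ := by positivity
      apply div_nonpos_of_nonpos_of_nonneg <;> nlinarith
    calc r ^ m * Real.exp (-(δ * r ^ 2) / (4 * τ)) ≤ (2 * A) ^ m * 1 := by
          apply mul_le_mul h1 h2 (Real.exp_nonneg _) (by positivity)
      _ = 2 ^ m * A ^ m := by rw [mul_one, mul_pow]
      _ ≤ 2 ^ m * (1 + (m.factorial : ℝ) / δ ^ m) * A ^ m := by
          nlinarith [mul_pos (pow_pos (show (0:ℝ) < 2 by norm_num) m) (pow_pos hA m),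
            mul_nonneg hQ (mul_pos (pow_pos (show (0:ℝ) < 2 by norm_num) m) (pow_pos hA m)).le]
  · -- r > 2A
    set z : ℝ := (δ * r ^ 2) / (4 * τ) with hzdef
    have hz : 0 ≤ z := by positivity
    have hfac : z ^ m ≤ (m.factorial : ℝ) * Real.exp z := by
      have h := Real.pow_div_factorial_le_exp z hz m
      have hf : (0:ℝ) < (m.factorial : ℝ) := by exact_mod_cast m.factorial_pos
      rw [div_le_iff₀ hf] at h
      exact h.trans_eq (mul_comm _ _)
    have hr2m : r ^ (2 * m) * Real.exp (-z) ≤ (m.factorial : ℝ) * (4 * τ / δ) ^ m := by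
      have hz2 : (4 * τ / δ) * z = r ^ 2 := by
        rw [hzdef]
        field_simp
      have hrz : r ^ (2 * m) = (4 * τ / δ) ^ m * z ^ m := by
        rw [← mul_pow, hz2, ← pow_mul, mul_comm 2 m, pow_mul]
      rw [hrz]
      calc (4 * τ / δ) ^ m * z ^ m * Real.exp (-z)
          ≤ (4 * τ / δ) ^ m * ((m.factorial : ℝ) * Real.exp z) * Real.exp (-z) := by
            apply mul_le_mul_of_nonneg_right _ (Real.exp_nonneg _)
            apply mul_le_mul_of_nonneg_left hfac (by positivity)
        _ = (4 * τ / δ) ^ m * (m.factorial : ℝ) * (Real.exp z * Real.exp (-z)) := by ring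
        _ = (m.factorial : ℝ) * (4 * τ / δ) ^ m := by
            rw [← Real.exp_add, add_neg_cancel, Real.exp_zero]; ring
    have hpow : r ^ m * (2 * A) ^ m ≤ r ^ (2 * m) := by
      have h1 : (2 * A) ^ m ≤ r ^ m := pow_le_pow_left₀ (by positivity) hcase.le m
      calc r ^ m * (2 * A) ^ m ≤ r ^ m * r ^ m :=
            mul_le_mul_of_nonneg_left h1 (pow_nonneg hr m)
        _ = r ^ (2 * m) := by rw [← pow_add, two_mul]
    have h2Am : (0:ℝ) < (2 * A) ^ m := by positivity
    have step : r ^ m * Real.exp (-z) ≤ (m.factorial : ℝ) * (4 * τ / δ) ^ m / (2 * A) ^ m := by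
      rw [le_div_iff₀ h2Am]
      calc r ^ m * Real.exp (-z) * (2 * A) ^ m
          = (r ^ m * (2 * A) ^ m) * Real.exp (-z) := by ring
        _ ≤ r ^ (2 * m) * Real.exp (-z) :=
            mul_le_mul_of_nonneg_right hpow (Real.exp_nonneg _)
        _ ≤ (m.factorial : ℝ) * (4 * τ / δ) ^ m := hr2m
    have hval : (m.factorial : ℝ) * (4 * τ / δ) ^ m / (2 * A) ^ m
        = ((m.factorial : ℝ) / δ ^ m) * (2 ^ m * A ^ m) := by
      have h5 : (4 * τ / δ) ^ m / (2 * A) ^ m = (2 * A / δ) ^ m := by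
        rw [← div_pow]
        congr 1
        rw [← hA2]
        field_simp
        ring
      rw [mul_div_assoc, h5, div_pow, mul_pow]
      ring
    have : r ^ m * Real.exp (-z) ≤ ((m.factorial : ℝ) / δ ^ m) * (2 ^ m * A ^ m) := by
      rw [← hval]; exact step
    have hneg : -(δ * r ^ 2) / (4 * τ) = -z := by rw [hzdef]; ring
    rw [hneg]
    nlinarith [mul_pos (pow_pos (show (0:ℝ) < 2 by norm_num) m) (pow_pos hA m)]

/-- Absorption: `heatK τ * ‖y‖^m ≤ C τ^{m/2} heatK ((1+p)τ)`. -/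
lemma heatK_absorb (n m : ℕ) {p τ : ℝ} (hp : 0 < p) (hτ : 0 < τ)
    (y : EuclideanSpace ℝ (Fin n)) :
    heatK n τ 0 y * ‖y‖ ^ m ≤
      ((1 + p) ^ ((n : ℝ) / 2) * (2 ^ m * (1 + (m.factorial : ℝ) / (p / (1 + p)) ^ m))) *
        τ ^ ((m : ℝ) / 2) * heatK n ((1 + p) * τ) 0 y := by
  have hp1 : (0:ℝ) < 1 + p := by linarith
  set δ : ℝ := p / (1 + p) with hδdef
  have hδ0 : 0 < δ := by positivity
  set r : ℝ := ‖y‖ with hrdef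
  have hr : 0 ≤ r := norm_nonneg y
  have h0 : ‖(0 : EuclideanSpace ℝ (Fin n)) - y‖ = ‖y‖ := by rw [zero_sub, norm_neg]
  have hsplit : Real.exp (-r ^ 2 / (4 * τ)) =
      Real.exp (-(δ * r ^ 2) / (4 * τ)) * Real.exp (-r ^ 2 / (4 * ((1 + p) * τ))) := by
    rw [← Real.exp_add]
    congr 1
    rw [hδdef]
    field_simp
    ring
  have hpre : (4 * π * τ) ^ (-(n : ℝ) / 2) =
      (1 + p) ^ ((n : ℝ) / 2) * (4 * π * ((1 + p) * τ)) ^ (-(n : ℝ) / 2) := by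
    rw [show (-(n : ℝ) / 2) = -((n : ℝ) / 2) by ring]
    exact rpow_aux2 (by positivity) (by positivity) hp1 (by ring) _
  have hcore := core_bound m hδ0 hτ hr
  simp only [heatK, h0]
  rw [hpre, hsplit]
  have hKpos : (0:ℝ) ≤ (4 * π * ((1 + p) * τ)) ^ (-(n : ℝ) / 2) :=
    Real.rpow_nonneg (by positivity) _
  calc (1 + p) ^ ((n : ℝ) / 2) * (4 * π * ((1 + p) * τ)) ^ (-(n : ℝ) / 2) *
        (Real.exp (-(δ * r ^ 2) / (4 * τ)) * Real.exp (-r ^ 2 / (4 * ((1 + p) * τ)))) * r ^ m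
      = ((1 + p) ^ ((n : ℝ) / 2) * (4 * π * ((1 + p) * τ)) ^ (-(n : ℝ) / 2) *
          Real.exp (-r ^ 2 / (4 * ((1 + p) * τ)))) *
        (r ^ m * Real.exp (-(δ * r ^ 2) / (4 * τ))) := by ring
    _ ≤ ((1 + p) ^ ((n : ℝ) / 2) * (4 * π * ((1 + p) * τ)) ^ (-(n : ℝ) / 2) *
          Real.exp (-r ^ 2 / (4 * ((1 + p) * τ)))) *
        (2 ^ m * (1 + (m.factorial : ℝ) / δ ^ m) * τ ^ ((m : ℝ) / 2)) := by
        apply mul_le_mul_of_nonneg_left hcore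
        positivity
    _ = (1 + p) ^ ((n : ℝ) / 2) * (2 ^ m * (1 + (m.factorial : ℝ) / δ ^ m)) *
        τ ^ ((m : ℝ) / 2) *
        ((4 * π * ((1 + p) * τ)) ^ (-(n : ℝ) / 2) *
          Real.exp (-r ^ 2 / (4 * ((1 + p) * τ)))) := by ring

/-- Monotonicity in time. -/
lemma heatK_mono (n : ℕ) {a b : ℝ} (ha : 0 < a) (hab : a ≤ b)
    (x y : EuclideanSpace ℝ (Fin n)) :
    heatK n a x y ≤ (b / a) ^ ((n : ℝ) / 2) * heatK n b x y := by
  have hb : 0 < b := lt_of_lt_of_le ha hab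
  have hpre : (4 * π * a) ^ (-(n : ℝ) / 2) =
      (b / a) ^ ((n : ℝ) / 2) * (4 * π * b) ^ (-(n : ℝ) / 2) := by
    rw [show (-(n : ℝ) / 2) = -((n : ℝ) / 2) by ring]
    refine rpow_aux2 (by positivity) (by positivity) (by positivity) ?_ _
    field_simp
  have hexp : Real.exp (-‖x - y‖ ^ 2 / (4 * a)) ≤ Real.exp (-‖x - y‖ ^ 2 / (4 * b)) := by
    apply Real.exp_le_exp.mpr
    rw [neg_div, neg_div, neg_le_neg_iff]
    apply div_le_div_of_nonneg_left (by positivity) (by positivity) (by linarith)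
  simp only [heatK]
  rw [hpre, mul_assoc]
  apply mul_le_mul_of_nonneg_left _ (Real.rpow_nonneg (by positivity) _)
  apply mul_le_mul_of_nonneg_left hexp (Real.rpow_nonneg (by positivity) _)


/-- Gaussian convolution estimate: for every `m ≥ 0` and `p > 0` there is `c_{m,p}`,
independent of `x` and `t > 0`, with
`∫₀^t ∫ K(t−s; 0, y) |y|^m K(ps; y, x) dy ds ≤ c_{m,p} t^{1+m/2} K((1+p)t; 0, x)`. -/
theorem heat_kernel_convolution_estimate (n m : ℕ) (p : ℝ) (hp : 0 < p) :
    ∃ c : ℝ, 0 < c ∧ ∀ t : ℝ, 0 < t → ∀ x : EuclideanSpace ℝ (Fin n),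
      (∫ s in (0:ℝ)..t, ∫ y : EuclideanSpace ℝ (Fin n),
          heatK n (t - s) 0 y * ‖y‖ ^ m * heatK n (p * s) y x) ≤
        c * t ^ (1 + (m : ℝ) / 2) * heatK n ((1 + p) * t) 0 x := by
  have h1p : (0:ℝ) < 1 + p := by linarith
  set δ : ℝ := p / (1 + p) with hδdef
  have hδ0 : 0 < δ := by positivity
  set C₁ : ℝ := (1 + p) ^ ((n : ℝ) / 2) * (2 ^ m * (1 + (m.factorial : ℝ) / δ ^ m)) with hC₁
  set C₂ : ℝ := ((1 + p) / p) ^ ((n : ℝ) / 2) with hC₂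
  have hC₁0 : 0 < C₁ := by
    apply mul_pos (Real.rpow_pos_of_pos h1p _)
    positivity
  have hC₂0 : 0 < C₂ := Real.rpow_pos_of_pos (by positivity) _
  refine ⟨C₁ * C₂, mul_pos hC₁0 hC₂0, fun t ht x ↦ ?_⟩
  set H : ℝ := heatK n ((1 + p) * t) 0 x with hH
  have hH0 : 0 ≤ H := heatK_nonneg n (by positivity) 0 x
  set K : ℝ := C₁ * C₂ * t ^ ((m : ℝ) / 2) * H with hK
  have hK0 : 0 ≤ K := by positivity
  have inner_le : ∀ s ∈ Set.Ioo (0:ℝ) t,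
      (∫ y : EuclideanSpace ℝ (Fin n),
        heatK n (t - s) 0 y * ‖y‖ ^ m * heatK n (p * s) y x) ≤ K := by
    intro s hs
    obtain ⟨hs0, hst⟩ := hs
    have hτ : 0 < t - s := by linarith
    have hps : 0 < p * s := by positivity
    have hconv := heatK_conv n (a := (1 + p) * (t - s)) (b := p * s) (by positivity) hps x
    have hptw : ∀ y : EuclideanSpace ℝ (Fin n),
        heatK n (t - s) 0 y * ‖y‖ ^ m * heatK n (p * s) y x ≤
          (C₁ * (t - s) ^ ((m : ℝ) / 2)) *
            (heatK n ((1 + p) * (t - s)) 0 y * heatK n (p * s) y x) := by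
      intro y
      have h1 := heatK_absorb n m hp hτ y
      have h2 := mul_le_mul_of_nonneg_right h1 (heatK_nonneg n hps.le y x)
      calc heatK n (t - s) 0 y * ‖y‖ ^ m * heatK n (p * s) y x
          ≤ C₁ * (t - s) ^ ((m : ℝ) / 2) * heatK n ((1 + p) * (t - s)) 0 y *
              heatK n (p * s) y x := h2
        _ = (C₁ * (t - s) ^ ((m : ℝ) / 2)) *
              (heatK n ((1 + p) * (t - s)) 0 y * heatK n (p * s) y x) := by ring
    have hmain : (∫ y : EuclideanSpace ℝ (Fin n),
        heatK n (t - s) 0 y * ‖y‖ ^ m * heatK n (p * s) y x) ≤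
          (C₁ * (t - s) ^ ((m : ℝ) / 2)) * heatK n ((1 + p) * (t - s) + p * s) 0 x := by
      have hgi := hconv.1.const_mul (C₁ * (t - s) ^ ((m : ℝ) / 2))
      have step := integral_mono_of_nonneg (f := fun y : EuclideanSpace ℝ (Fin n) ↦
          heatK n (t - s) 0 y * ‖y‖ ^ m * heatK n (p * s) y x)
        (g := fun y : EuclideanSpace ℝ (Fin n) ↦ (C₁ * (t - s) ^ ((m : ℝ) / 2)) *
          (heatK n ((1 + p) * (t - s)) 0 y * heatK n (p * s) y x))
        (ae_of_all _ (fun y ↦ by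
          have := heatK_nonneg n hτ.le (0 : EuclideanSpace ℝ (Fin n)) y
          have := heatK_nonneg n hps.le y x
          positivity)) hgi (ae_of_all _ hptw)
      rw [integral_const_mul, hconv.2] at step
      exact step
    have hsum : (1 + p) * (t - s) + p * s = (1 + p) * t - s := by ring
    rw [hsum] at hmain
    set a : ℝ := (1 + p) * t - s with hadef
    have ha0 : 0 < a := by rw [hadef]; nlinarith
    have hab : a ≤ (1 + p) * t := by rw [hadef]; linarith
    have hpta : p * t ≤ a := by rw [hadef]; nlinarith
    have hmono := heatK_mono n ha0 hab (0 : EuclideanSpace ℝ (Fin n)) x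
    have hratio : ((1 + p) * t / a) ^ ((n : ℝ) / 2) ≤ C₂ := by
      rw [hC₂]
      apply Real.rpow_le_rpow (by positivity) _ (by positivity)
      have h1 : (1 + p) * t / a ≤ (1 + p) * t / (p * t) :=
        div_le_div_of_nonneg_left (by positivity) (by positivity) hpta
      have h2 : (1 + p) * t / (p * t) = (1 + p) / p := by
        field_simp
      linarith [h1, h2.le]
    have hKt : heatK n a 0 x ≤ C₂ * H := by
      refine hmono.trans ?_
      exact mul_le_mul_of_nonneg_right hratio hH0
    have hts : (t - s) ^ ((m : ℝ) / 2) ≤ t ^ ((m : ℝ) / 2) :=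
      Real.rpow_le_rpow hτ.le (by linarith) (by positivity)
    calc (∫ y : EuclideanSpace ℝ (Fin n),
        heatK n (t - s) 0 y * ‖y‖ ^ m * heatK n (p * s) y x)
        ≤ (C₁ * (t - s) ^ ((m : ℝ) / 2)) * heatK n a 0 x := hmain
      _ ≤ (C₁ * (t - s) ^ ((m : ℝ) / 2)) * (C₂ * H) := by
          apply mul_le_mul_of_nonneg_left hKt
          have : 0 ≤ (t - s) ^ ((m : ℝ) / 2) := Real.rpow_nonneg hτ.le _
          positivity
      _ ≤ (C₁ * t ^ ((m : ℝ) / 2)) * (C₂ * H) := by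
          apply mul_le_mul_of_nonneg_right _ (by positivity)
          exact mul_le_mul_of_nonneg_left hts hC₁0.le
      _ = K := by rw [hK]; ring
  have hf0 : ∀ s ∈ Set.Ioo (0:ℝ) t, 0 ≤ (∫ y : EuclideanSpace ℝ (Fin n),
      heatK n (t - s) 0 y * ‖y‖ ^ m * heatK n (p * s) y x) := by
    intro s hs
    obtain ⟨hs0, hst⟩ := hs
    apply integral_nonneg
    intro y
    have h1 := heatK_nonneg n (by linarith : (0:ℝ) ≤ t - s) (0 : EuclideanSpace ℝ (Fin n)) y
    have h2 := heatK_nonneg n (by positivity : (0:ℝ) ≤ p * s) y x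
    positivity
  rw [intervalIntegral.integral_of_le ht.le, integral_Ioc_eq_integral_Ioo]
  have hgi : IntegrableOn (fun _ : ℝ ↦ K) (Set.Ioo 0 t) volume := by
    apply (integrableOn_const_iff (C := K)).mpr
    right
    exact measure_Ioo_lt_top
  have hbound := integral_mono_of_nonneg (μ := volume.restrict (Set.Ioo 0 t))
    (f := fun s : ℝ ↦ ∫ y : EuclideanSpace ℝ (Fin n),
      heatK n (t - s) 0 y * ‖y‖ ^ m * heatK n (p * s) y x)
    (g := fun _ : ℝ ↦ K)
    ((ae_restrict_iff' measurableSet_Ioo).mpr (ae_of_all _ hf0)) hgi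
    ((ae_restrict_iff' measurableSet_Ioo).mpr (ae_of_all _ inner_le))
  refine hbound.trans ?_
  rw [setIntegral_const, measureReal_def, Real.volume_Ioo, sub_zero, smul_eq_mul,
    ENNReal.toReal_ofReal ht.le]
  have hpow : t ^ (1 + (m : ℝ) / 2) = t * t ^ ((m : ℝ) / 2) := by
    rw [Real.rpow_add ht, Real.rpow_one]
  rw [hpow, hK]
  ring_nf
  exact le_refl _
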